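/- arXiv:1512.00828 — 3 statements merged into one kernel-verified Lean document; each statement's English description precedes it below -/
import Mathlib

section
/- Let 𝒢 ⊆ L^p(m) be a nonempty set of nonnegative functions that is bounded in L^p-norm, closed in L^p(m), and closed under pointwise maximum (G₁, G₂ ∈ 𝒢 implies max{G₁,G₂} ∈ 𝒢). Then there exists G ∈ 𝒢 such that G' ≤ G m-almost everywhere for every G' ∈ 𝒢; in particular ‖G‖_{L^p} = sup_{G' ∈ 𝒢} ‖G'‖_{L^p}. -/
open MeasureTheory
open scoped ENNReal

section Aux

variable {α : Type*} [MeasurableSpace α] {μ : Measure α} {p : ℝ≥0∞}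

lemma lint_ne_top (hp0 : p ≠ 0) (hp' : p ≠ ∞) [Fact (1 ≤ p)] (f : Lp ℝ p μ) :
    (∫⁻ x, (‖f x‖₊ : ℝ≥0∞) ^ p.toReal ∂μ) ≠ ∞ := by
  have h := Lp.eLpNorm_ne_top f
  rw [eLpNorm_eq_lintegral_rpow_enorm_toReal hp0 hp'] at h
  simp only [enorm_eq_nnnorm] at h
  intro hI
  rw [hI, ENNReal.top_rpow_of_pos (by simp [ENNReal.toReal_pos hp0 hp'])] at h
  exact h rfl

lemma norm_rpow_eq_lint (hp0 : p ≠ 0) (hp' : p ≠ ∞) [Fact (1 ≤ p)] (f : Lp ℝ p μ) :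
    ‖f‖ ^ p.toReal = (∫⁻ x, (‖f x‖₊ : ℝ≥0∞) ^ p.toReal ∂μ).toReal := by
  have hq : 0 < p.toReal := ENNReal.toReal_pos hp0 hp'
  rw [Lp.norm_def, eLpNorm_eq_lintegral_rpow_enorm_toReal hp0 hp', ENNReal.toReal_rpow,
    ← ENNReal.rpow_mul, one_div, inv_mul_cancel₀ hq.ne', ENNReal.rpow_one]
  rfl

lemma key_ineq (hp0 : p ≠ 0) (hp' : p ≠ ∞) [Fact (1 ≤ p)]
    {f g : Lp ℝ p μ} (hf : 0 ≤ f) (hfg : f ≤ g) :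
    ‖g - f‖ ^ p.toReal + ‖f‖ ^ p.toReal ≤ ‖g‖ ^ p.toReal := by
  have hq : 0 < p.toReal := ENNReal.toReal_pos hp0 hp'
  have hq1 : 1 ≤ p.toReal := by
    simpa using ENNReal.toReal_mono hp' (Fact.out : 1 ≤ p)
  have hpt : ∀ᵐ x ∂μ, (‖(g - f : Lp ℝ p μ) x‖₊ : ℝ≥0∞) ^ p.toReal
      + (‖f x‖₊ : ℝ≥0∞) ^ p.toReal ≤ (‖g x‖₊ : ℝ≥0∞) ^ p.toReal := by
    filter_upwards [Lp.coeFn_sub g f, (Lp.coeFn_le f g).mpr hfg,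
      (Lp.coeFn_nonneg f).mpr hf] with x hsub hle hpos
    have h0 : (0:ℝ) ≤ f x := hpos
    have h1 : (0:ℝ) ≤ g x - f x := by simpa using hle
    calc (‖(g - f : Lp ℝ p μ) x‖₊ : ℝ≥0∞) ^ p.toReal + (‖f x‖₊ : ℝ≥0∞) ^ p.toReal
        ≤ ((‖(g - f : Lp ℝ p μ) x‖₊ : ℝ≥0∞) + (‖f x‖₊ : ℝ≥0∞)) ^ p.toReal :=
          ENNReal.add_rpow_le_rpow_add _ _ hq1
      _ = (‖g x‖₊ : ℝ≥0∞) ^ p.toReal := by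
          simp only [← enorm_eq_nnnorm]
          rw [hsub, Pi.sub_apply, Real.enorm_eq_ofReal h1, Real.enorm_eq_ofReal h0,
            ← ENNReal.ofReal_add h1 h0, sub_add_cancel,
            Real.enorm_eq_ofReal (le_trans h0 hle)]
  have hmeas : AEMeasurable (fun x => (‖(g - f : Lp ℝ p μ) x‖₊ : ℝ≥0∞) ^ p.toReal) μ :=
    (AEStronglyMeasurable.enorm (Lp.aestronglyMeasurable (g - f))).pow_const _
  have hInt : (∫⁻ x, (‖(g - f : Lp ℝ p μ) x‖₊ : ℝ≥0∞) ^ p.toReal ∂μ)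
      + (∫⁻ x, (‖f x‖₊ : ℝ≥0∞) ^ p.toReal ∂μ)
      ≤ ∫⁻ x, (‖g x‖₊ : ℝ≥0∞) ^ p.toReal ∂μ := by
    rw [← lintegral_add_left' hmeas]
    exact lintegral_mono_ae hpt
  rw [norm_rpow_eq_lint hp0 hp', norm_rpow_eq_lint hp0 hp', norm_rpow_eq_lint hp0 hp',
    ← ENNReal.toReal_add (lint_ne_top hp0 hp' _) (lint_ne_top hp0 hp' _)]
  exact ENNReal.toReal_mono (lint_ne_top hp0 hp' _) hInt

end Aux

/-- Let `𝒢 ⊆ L^p(μ)` (with `1 < p < ∞`) be a nonempty set of nonnegative functions that is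
bounded in `L^p`-norm, closed in `L^p`, and closed under pointwise maximum.  Then `𝒢` has an
element `G` which dominates every `G' ∈ 𝒢` `μ`-almost everywhere (i.e. in the a.e.-order of
`L^p`); in particular `‖G‖ = sup_{G' ∈ 𝒢} ‖G'‖`. -/
theorem stmt1 {α : Type*} [MeasurableSpace α] (μ : Measure α) (p : ℝ≥0∞)
    (hp : 1 < p) (hp' : p ≠ ∞) [Fact (1 ≤ p)]
    (𝒢 : Set (Lp ℝ p μ)) (hne : 𝒢.Nonempty)
    (hnonneg : ∀ G ∈ 𝒢, 0 ≤ G)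
    (hbdd : ∃ C : ℝ, ∀ G ∈ 𝒢, ‖G‖ ≤ C)
    (hclosed : IsClosed 𝒢)
    (hmax : ∀ G₁ ∈ 𝒢, ∀ G₂ ∈ 𝒢, G₁ ⊔ G₂ ∈ 𝒢) :
    ∃ G ∈ 𝒢, (∀ G' ∈ 𝒢, G' ≤ G) ∧ ‖G‖ = ⨆ G' : 𝒢, ‖(G' : Lp ℝ p μ)‖ := by
  have hp0 : p ≠ 0 := (zero_lt_one.trans hp).ne'
  have hq : 0 < p.toReal := ENNReal.toReal_pos hp0 hp'
  obtain ⟨C, hC⟩ := hbdd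
  have hneS : Nonempty 𝒢 := hne.to_subtype
  have hbdd' : BddAbove (Set.range fun G' : 𝒢 => ‖(G' : Lp ℝ p μ)‖) := by
    refine ⟨C, ?_⟩
    rintro x ⟨⟨G', hG'⟩, rfl⟩
    exact hC G' hG'
  set S : ℝ := ⨆ G' : 𝒢, ‖(G' : Lp ℝ p μ)‖ with hS
  have hle_S : ∀ G' ∈ 𝒢, ‖G'‖ ≤ S := fun G' h => le_ciSup hbdd' ⟨G', h⟩
  -- a norm-monotonicity helper
  have hnorm_mono : ∀ {a b : Lp ℝ p μ}, 0 ≤ a → a ≤ b → ‖a‖ ≤ ‖b‖ := by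
    intro a b ha hab
    have hk := key_ineq hp0 hp' ha hab
    have h2 : ‖a‖ ^ p.toReal ≤ ‖b‖ ^ p.toReal := by
      have := Real.rpow_nonneg (norm_nonneg (b - a)) p.toReal
      linarith
    exact (Real.rpow_le_rpow_iff (norm_nonneg a) (norm_nonneg b) hq).mp h2
  -- choose an approximating sequence
  have hex : ∀ n : ℕ, ∃ g ∈ 𝒢, S - 1/(n+1) < ‖g‖ := by
    intro n
    have hlt : S - 1/(n+1) < S := by
      have : (0:ℝ) < 1/(n+1) := by positivity
      linarith
    obtain ⟨⟨g, hg⟩, hgt⟩ := exists_lt_of_lt_ciSup hlt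
    exact ⟨g, hg, hgt⟩
  choose g hg hglt using hex
  -- running maxima
  let F : ℕ → Lp ℝ p μ := fun n => Nat.rec (g 0) (fun n Fn => Fn ⊔ g (n+1)) n
  have hF : ∀ n, F n ∈ 𝒢 := by
    intro n
    induction n with
    | zero => exact hg 0
    | succ n ih => exact hmax _ ih _ (hg (n+1))
  have hFmono : Monotone F := monotone_nat_of_le_succ fun n => le_sup_left
  have hgF : ∀ n, g n ≤ F n := by
    intro n
    cases n with
    | zero => exact le_rfl
    | succ n => exact le_sup_right
  have hFS : ∀ n, ‖F n‖ ≤ S := fun n => hle_S _ (hF n)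
  -- the norms of F n converge to S
  have h1 : Filter.Tendsto (fun n : ℕ => S - 1/(n+1)) Filter.atTop (nhds S) := by
    simpa using tendsto_const_nhds.sub (tendsto_one_div_add_atTop_nhds_zero_nat (𝕜 := ℝ))
  have hnormF : Filter.Tendsto (fun n => ‖F n‖) Filter.atTop (nhds S) :=
    tendsto_of_tendsto_of_tendsto_of_le_of_le h1 tendsto_const_nhds
      (fun n => ((hglt n).le.trans (hnorm_mono (hnonneg _ (hg n)) (hgF n)))) hFS
  -- the powers of the norms
  have htmono : Monotone fun n => ‖F n‖ ^ p.toReal := fun n m h =>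
    Real.rpow_le_rpow (norm_nonneg _) (hnorm_mono (hnonneg _ (hF n)) (hFmono h)) hq.le
  have htS : ∀ n, ‖F n‖ ^ p.toReal ≤ S ^ p.toReal := fun n =>
    Real.rpow_le_rpow (norm_nonneg _) (hFS n) hq.le
  have htlim : Filter.Tendsto (fun n => ‖F n‖ ^ p.toReal) Filter.atTop (nhds (S ^ p.toReal)) :=
    hnormF.rpow_const (Or.inr hq.le)
  -- Cauchy
  have hcauchy : CauchySeq F := by
    apply cauchySeq_of_le_tendsto_0
      (fun N => (S ^ p.toReal - ‖F N‖ ^ p.toReal) ^ (p.toReal)⁻¹)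
    · have hdist : ∀ N n m, N ≤ n → n ≤ m → dist (F n) (F m)
          ≤ (S ^ p.toReal - ‖F N‖ ^ p.toReal) ^ (p.toReal)⁻¹ := by
        intro N n m hNn hnm
        have hk := key_ineq hp0 hp' (hnonneg _ (hF n)) (hFmono hnm)
        have hy : 0 ≤ S ^ p.toReal - ‖F N‖ ^ p.toReal := by linarith [htS N]
        rw [dist_eq_norm, norm_sub_rev]
        rw [Real.le_rpow_inv_iff_of_pos (norm_nonneg _) hy hq]
        have := htmono hNn
        linarith [htS m]
      intro n m N hNn hNm
      rcases le_total n m with h | h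
      · exact hdist N n m hNn h
      · rw [dist_comm]
        exact hdist N m n hNm h
    · have hsub := Filter.Tendsto.sub
        (tendsto_const_nhds : Filter.Tendsto (fun _ : ℕ => S ^ p.toReal)
          Filter.atTop (nhds (S ^ p.toReal))) htlim
      rw [sub_self] at hsub
      have h2 := hsub.rpow_const (p := (p.toReal)⁻¹) (Or.inr (by positivity))
      rwa [Real.zero_rpow (by positivity)] at h2
  obtain ⟨G, hGlim⟩ := cauchySeq_tendsto_of_complete hcauchy
  have hG𝒢 : G ∈ 𝒢 := hclosed.mem_of_tendsto hGlim (Filter.Eventually.of_forall hF)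
  have hGnorm : ‖G‖ = S := tendsto_nhds_unique hGlim.norm hnormF
  refine ⟨G, hG𝒢, ?_, hGnorm⟩
  intro G' hG'
  have hH : G ⊔ G' ∈ 𝒢 := hmax G hG𝒢 G' hG'
  have h1' : ‖G ⊔ G'‖ ≤ ‖G‖ := by rw [hGnorm]; exact hle_S _ hH
  have hk := key_ineq hp0 hp' (hnonneg G hG𝒢) (le_sup_left : G ≤ G ⊔ G')
  have h2 : ‖G ⊔ G' - G‖ ^ p.toReal ≤ 0 := by
    have := Real.rpow_le_rpow (norm_nonneg (G ⊔ G')) h1' hq.le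
    have hGpow := Real.rpow_nonneg (norm_nonneg G) p.toReal
    linarith
  have h3 : G ⊔ G' - G = 0 := by
    by_contra hne0
    have hpos : 0 < ‖G ⊔ G' - G‖ := norm_pos_iff.mpr hne0
    exact absurd h2 (not_le.mpr (Real.rpow_pos_of_pos hpos _))
  have h4 : G ⊔ G' = G := by rwa [sub_eq_zero] at h3
  exact le_sup_right.trans h4.le
end

section
/- Let V be a Banach space, W a reflexive Banach space, D ⊆ V a linear subspace and A : D → W a linear map. Let G ⊆ V × W be the closure of the graph of A, let W₀ = {w ∈ W : (0,w) ∈ G}, which is a closed linear subspace of W, let i : W → W/W₀ be the quotient map, and set D̄ = {v ∈ V : ∃ w ∈ W, (v,w) ∈ G}. Then the assignment Ǎ(v) := i(w), for any w ∈ W with (v,w) ∈ G, is well-defined on D̄, is a closed linear operator Ǎ : D̄ → W/W₀ with D ⊆ D̄, and satisfies Ǎv = i(Av) for all v ∈ D. -/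
open Filter

/-- Closure of a partially defined linear operator into a reflexive Banach space: let
`V, W` be Banach spaces with `W` reflexive, `D ⊆ V` a subspace and `A : D → W` linear.
With `G` the closure of the graph of `A`, `W₀ = {w : (0,w) ∈ G}` is a closed subspace of `W`,
and setting `D̄ = {v : ∃ w, (v,w) ∈ G}`, the assignment `Ǎ v := i w` (for any `w` with
`(v,w) ∈ G`, `i : W → W/W₀` the quotient map) is a well-defined closed linear operator
`Ǎ : D̄ → W/W₀` with `D ⊆ D̄` and `Ǎ v = i (A v)` for `v ∈ D`. -/
theorem stmt7 {V W : Type*}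
    [NormedAddCommGroup V] [NormedSpace ℝ V] [CompleteSpace V]
    [NormedAddCommGroup W] [NormedSpace ℝ W] [CompleteSpace W]
    (hrefl : Function.Surjective (NormedSpace.inclusionInDoubleDual ℝ W))
    (D : Submodule ℝ V) (A : D →ₗ[ℝ] W) :
    ∃ W₀ : Submodule ℝ W, IsClosed (W₀ : Set W) ∧
      (W₀ : Set W) = {w : W | ((0 : V), w) ∈
        closure {q : V × W | ∃ v : D, q = ((v : V), A v)}} ∧
      ∃ (Dbar : Submodule ℝ V) (Acl : Dbar →ₗ[ℝ] (W ⧸ W₀)),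
        (Dbar : Set V) = {v : V | ∃ w : W, (v, w) ∈
          closure {q : V × W | ∃ v' : D, q = ((v' : V), A v')}} ∧
        (D : Set V) ⊆ (Dbar : Set V) ∧
        (∀ (v : Dbar) (w : W),
          ((v : V), w) ∈ closure {q : V × W | ∃ v' : D, q = ((v' : V), A v')} →
          Acl v = Submodule.Quotient.mk w) ∧
        (∀ (v : D) (hv : (v : V) ∈ Dbar),
          Acl ⟨(v : V), hv⟩ = Submodule.Quotient.mk (A v)) ∧
        IsClosed {q : V × (W ⧸ W₀) | ∃ v : Dbar, q = ((v : V), Acl v)} := by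
  classical
  set S : Set (V × W) := {q : V × W | ∃ v : D, q = ((v : V), A v)} with hSdef
  set T : D →ₗ[ℝ] V × W := D.subtype.prod A with hTdef
  have hST : S = (LinearMap.range T : Set (V × W)) := by
    ext q
    simp [hSdef, hTdef, LinearMap.mem_range, eq_comm, LinearMap.prod_apply]
  set G : Submodule ℝ (V × W) := (LinearMap.range T).topologicalClosure with hGdef
  have hGc : (G : Set (V × W)) = closure S := by
    rw [hST, hGdef, Submodule.topologicalClosure_coe]
  have hGclosed : IsClosed (G : Set (V × W)) := hGc ▸ isClosed_closure
  set W₀ : Submodule ℝ W := G.comap (LinearMap.inr ℝ V W) with hW₀def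
  have hW₀mem : ∀ w : W, w ∈ W₀ ↔ ((0 : V), w) ∈ G := by
    intro w; rw [hW₀def, Submodule.mem_comap, LinearMap.inr_apply]
  have hW₀set : (W₀ : Set W) = {w : W | ((0 : V), w) ∈ closure S} := by
    ext w; simp [hW₀mem, ← hGc, SetLike.mem_coe]
  have hW₀closed : IsClosed (W₀ : Set W) := by
    rw [hW₀set]
    exact IsClosed.preimage (Continuous.prodMk continuous_const continuous_id)
      (isClosed_closure (s := S))
  refine ⟨W₀, hW₀closed, hW₀set, ?_⟩
  set Dbar : Submodule ℝ V := G.map (LinearMap.fst ℝ V W) with hDbardef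
  have hDbarmem : ∀ v : V, v ∈ Dbar ↔ ∃ w : W, (v, w) ∈ G := by
    intro v
    constructor
    · rintro ⟨⟨a, b⟩, hab, rfl⟩; exact ⟨b, hab⟩
    · rintro ⟨w, hw⟩; exact ⟨(v, w), hw, rfl⟩
  have hDbarset : (Dbar : Set V) = {v : V | ∃ w : W, (v, w) ∈ closure S} := by
    ext v; simp only [SetLike.mem_coe, hDbarmem, Set.mem_setOf_eq, ← hGc]
  -- well-definedness
  have hwd : ∀ (x : V) (w w' : W), (x, w) ∈ G → (x, w') ∈ G →
      (Submodule.Quotient.mk w : W ⧸ W₀) = Submodule.Quotient.mk w' := by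
    intro x w w' hw hw'
    rw [Submodule.Quotient.eq]
    have : ((x, w) - (x, w') : V × W) ∈ G := G.sub_mem hw hw'
    exact (hW₀mem _).2 (by simpa [Prod.ext_iff] using this)
  -- selection
  have hsel : ∀ v : Dbar, ∃ w : W, ((v : V), w) ∈ G := fun v => (hDbarmem v).1 v.2
  set wsel : Dbar → W := fun v => Classical.choose (hsel v) with hwseldef
  have hwsel : ∀ v : Dbar, ((v : V), wsel v) ∈ G := fun v => Classical.choose_spec (hsel v)
  set Acl : Dbar →ₗ[ℝ] (W ⧸ W₀) :=
    { toFun := fun v => Submodule.Quotient.mk (wsel v)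
      map_add' := by
        intro x y
        have h1 : (((x + y : Dbar) : V), wsel x + wsel y) ∈ G := by
          have := G.add_mem (hwsel x) (hwsel y)
          simpa using this
        have := hwd _ _ _ (hwsel (x + y)) h1
        simpa [Submodule.Quotient.mk_add] using this
      map_smul' := by
        intro c x
        have h1 : (((c • x : Dbar) : V), c • wsel x) ∈ G := by
          have := G.smul_mem c (hwsel x)
          simpa using this
        have := hwd _ _ _ (hwsel (c • x)) h1
        simpa [Submodule.Quotient.mk_smul] using this } with hAcldef
  have hAclspec : ∀ (v : Dbar) (w : W), ((v : V), w) ∈ G →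
      Acl v = Submodule.Quotient.mk w := by
    intro v w hw
    exact hwd _ _ _ (hwsel v) hw
  have hDsub : (D : Set V) ⊆ (Dbar : Set V) := by
    intro v hv
    have : ((v : V), A ⟨v, hv⟩) ∈ G := by
      apply Submodule.le_topologicalClosure
      exact ⟨⟨v, hv⟩, rfl⟩
    exact (hDbarmem v).2 ⟨_, this⟩
  refine ⟨Dbar, Acl, hDbarset, hDsub, ?_, ?_, ?_⟩
  · intro v w hw
    apply hAclspec
    rw [← SetLike.mem_coe, hGc]
    exact hw
  · intro v hv
    apply hAclspec
    apply Submodule.le_topologicalClosure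
    exact ⟨v, rfl⟩
  · -- closedness of the graph of Acl
    set φ : V × W → V × (W ⧸ W₀) := Prod.map id W₀.mkQ with hφdef
    have hφq : IsOpenQuotientMap φ :=
      IsOpenQuotientMap.id.prodMap W₀.isOpenQuotientMap_mkQ
    have himg : {q : V × (W ⧸ W₀) | ∃ v : Dbar, q = ((v : V), Acl v)} =
        φ '' (G : Set (V × W)) := by
      ext ⟨x, y⟩
      constructor
      · rintro ⟨v, h⟩
        refine ⟨((v : V), wsel v), hwsel v, ?_⟩
        have hv : Acl v = Submodule.Quotient.mk (wsel v) := rfl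
        rw [h, hv]
        simp [hφdef]
      · rintro ⟨⟨a, b⟩, hab, h⟩
        obtain ⟨hx, hy⟩ := Prod.ext_iff.1 h
        simp only [hφdef, Prod.map_apply, id_eq, Submodule.mkQ_apply] at hx hy
        have ha : a ∈ Dbar := (hDbarmem a).2 ⟨b, hab⟩
        refine ⟨⟨a, ha⟩, ?_⟩
        have := hAclspec ⟨a, ha⟩ b hab
        simp [← hx, ← hy, this]
      
    rw [himg, ← hφq.isQuotientMap.isClosed_preimage]
    have hpre : φ ⁻¹' (φ '' (G : Set (V × W))) = (G : Set (V × W)) := by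
      apply Set.Subset.antisymm
      · rintro ⟨x, w⟩ ⟨⟨a, b⟩, hab, h⟩
        obtain ⟨hx, hy⟩ := Prod.ext_iff.1 h
        simp only [hφdef, Prod.map_apply, id_eq, Submodule.mkQ_apply] at hx hy
        have hx' : a = x := hx
        have : b - w ∈ W₀ := (Submodule.Quotient.eq W₀).1 hy
        have h0 : ((0 : V), b - w) ∈ G := (hW₀mem _).1 this
        have : ((a, b) - ((0 : V), b - w) : V × W) ∈ G := G.sub_mem hab h0
        simpa [hx', Prod.ext_iff, sub_sub_cancel] using this
      · exact Set.subset_preimage_image φ _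
    rw [hpre]
    exact hGclosed
end

section
/- Let (M,d,m) be a complete metric measure space with m a Radon measure finite on bounded sets. Define the Cheeger energy Ch₂ : L⁰(m) → [0,∞] by Ch₂(f) = inf{ liminf_n ∫ (lip f_n)² dm : f_n Lipschitz with lip f_n ∈ L²(m), f_n → f in L⁰(m) }. Assume (M,d,m) is infinitesimally Riemannian: for all Lipschitz functions f, g with lip f, lip g ∈ L²(m), the parallelogram identity (lip(f+g))² + (lip(f−g))² = 2(lip f)² + 2(lip g)² holds m-almost everywhere. Then (M,d,m) is infinitesimally Hilbertian: Ch₂ is a quadratic form, i.e. Ch₂(f+g) + Ch₂(f−g) = 2Ch₂(f) + 2Ch₂(g) for all f, g ∈ L⁰(m). -/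
open MeasureTheory Filter
open scoped ENNReal NNReal

/-- Convergence in L⁰(μ): convergence in measure on every measurable set of finite measure. -/
def TendstoL0 {α : Type*} [MeasurableSpace α] (μ : Measure α) (f : ℕ → α → ℝ) (g : α → ℝ) :
    Prop :=
  ∀ A : Set α, MeasurableSet A → μ A < ∞ → TendstoInMeasure (μ.restrict A) f atTop g

/-- The local Lipschitz constant (slope) `lip f (x) = limsup_{y → x} |f y - f x| / d(y,x)`,
equal to `0` at isolated points. -/
noncomputable def lip {M : Type*} [PseudoMetricSpace M] (f : M → ℝ) (x : M) : ℝ :=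
  Filter.limsup (fun y => |f y - f x| / dist y x) (nhdsWithin x {x}ᶜ)

/-- The Cheeger energy
`Ch₂(f) = inf { liminf_n ∫ (lip fₙ)² dμ : fₙ Lipschitz, lip fₙ ∈ L²(μ), fₙ → f in L⁰(μ) }`. -/
noncomputable def Ch2 {M : Type*} [PseudoMetricSpace M] [MeasurableSpace M] (μ : Measure M)
    (f : M → ℝ) : ℝ≥0∞ :=
  ⨅ (fn : ℕ → M → ℝ)
    (_ : ∀ n, (∃ K : ℝ≥0, LipschitzWith K (fn n)) ∧ MemLp (lip (fn n)) 2 μ)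
    (_ : TendstoL0 μ fn f),
    atTop.liminf fun n => ∫⁻ x, ENNReal.ofReal (lip (fn n) x ^ 2) ∂μ

open Metric Set
open scoped Topology

section LipLemmas

variable {M : Type*} [MetricSpace M] {K K₁ K₂ : ℝ≥0} {h h₁ h₂ : M → ℝ}

lemma lipRatio_nonneg (h : M → ℝ) (x y : M) : 0 ≤ |h y - h x| / dist y x :=
  div_nonneg (abs_nonneg _) dist_nonneg

lemma lipRatio_le_of_ne (hh : LipschitzWith K h) {x y : M} (hy : y ≠ x) :
    |h y - h x| / dist y x ≤ K := by
  rw [div_le_iff₀ (dist_pos.2 hy)]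
  simpa [Real.dist_eq] using hh.dist_le_mul y x

lemma lipRatio_ev_le (hh : LipschitzWith K h) (x : M) :
    ∀ᶠ y in 𝓝[≠] x, |h y - h x| / dist y x ≤ K :=
  eventually_nhdsWithin_of_forall fun _ hy => lipRatio_le_of_ne hh hy

lemma lipBddAbove (hh : LipschitzWith K h) (x : M) :
    IsBoundedUnder (· ≤ ·) (𝓝[≠] x) (fun y => |h y - h x| / dist y x) :=
  ⟨K, eventually_map.2 (lipRatio_ev_le hh x)⟩

lemma lipBddBelow (h : M → ℝ) (x : M) :
    IsBoundedUnder (· ≥ ·) (𝓝[≠] x) (fun y => |h y - h x| / dist y x) :=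
  ⟨0, eventually_map.2 (Eventually.of_forall fun y => lipRatio_nonneg h x y)⟩

lemma lipCobdd (h : M → ℝ) (x : M) [NeBot (𝓝[≠] x)] :
    IsCoboundedUnder (· ≤ ·) (𝓝[≠] x) (fun y => |h y - h x| / dist y x) :=
  (lipBddBelow h x).isCoboundedUnder_le

lemma limsup_bot_real {α : Type*} (u : α → ℝ) : limsup u (⊥ : Filter α) = 0 := by
  rw [limsup_eq]
  simp only [eventually_bot, Set.setOf_true]
  exact Real.sInf_of_not_bddBelow not_bddBelow_univ

lemma lip_nonneg (hh : LipschitzWith K h) (x : M) : 0 ≤ lip h x := by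
  rcases (𝓝[≠] x).eq_or_neBot with hbot | hne
  · rw [lip, hbot, limsup_bot_real]
  · exact le_limsup_of_frequently_le
      ((Eventually.of_forall fun y => lipRatio_nonneg h x y).frequently) (lipBddAbove hh x)

lemma lip_le_const (hh : LipschitzWith K h) (x : M) : lip h x ≤ K := by
  rcases (𝓝[≠] x).eq_or_neBot with hbot | hne
  · rw [lip, hbot, limsup_bot_real]; exact K.coe_nonneg
  · exact limsup_le_of_le (lipCobdd h x) (lipRatio_ev_le hh x)

lemma lip_const_mul (hh : LipschitzWith K h) (c : ℝ) (x : M) :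
    lip (fun y => c * h y) x = |c| * lip h x := by
  have hfun : (fun y => |c * h y - c * h x| / dist y x)
      = fun y => |c| * (|h y - h x| / dist y x) := by
    funext y; rw [← mul_sub, abs_mul, mul_div_assoc]
  rcases (𝓝[≠] x).eq_or_neBot with hbot | hne
  · rw [lip, lip, hbot, limsup_bot_real, limsup_bot_real, mul_zero]
  · rcases eq_or_ne c 0 with rfl | hc
    · rw [lip, hfun]
      simp only [abs_zero, zero_mul]
      exact limsup_const 0
    · have hcpos : (0 : ℝ) < |c| := abs_pos.2 hc
      have e : ℝ ≃o ℝ := OrderIso.mulLeft₀ |c| hcpos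
      rw [lip, lip, hfun]
      have hb := lipBddAbove hh x
      have hc1 := lipCobdd h x
      have hb2 : IsBoundedUnder (· ≤ ·) (𝓝[≠] x)
          fun y => (OrderIso.mulLeft₀ |c| hcpos) (|h y - h x| / dist y x) := by
        refine ⟨|c| * K, eventually_map.2 ?_⟩
        filter_upwards [lipRatio_ev_le hh x] with y hy
        simpa [OrderIso.mulLeft₀_apply] using mul_le_mul_of_nonneg_left hy hcpos.le
      have hc2 : IsCoboundedUnder (· ≤ ·) (𝓝[≠] x)
          fun y => (OrderIso.mulLeft₀ |c| hcpos) (|h y - h x| / dist y x) := by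
        refine IsBoundedUnder.isCoboundedUnder_le ⟨0, eventually_map.2 ?_⟩
        refine Eventually.of_forall fun y => ?_
        simpa [OrderIso.mulLeft₀_apply] using mul_nonneg hcpos.le (lipRatio_nonneg h x y)
      have := (OrderIso.limsup_apply (OrderIso.mulLeft₀ |c| hcpos) hb hc1 hb2 hc2).symm
      simpa [OrderIso.mulLeft₀_apply] using this

lemma lip_add_le (hh₁ : LipschitzWith K₁ h₁) (hh₂ : LipschitzWith K₂ h₂) (x : M) :
    lip (h₁ + h₂) x ≤ lip h₁ x + lip h₂ x := by
  rcases (𝓝[≠] x).eq_or_neBot with hbot | hne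
  · rw [lip, hbot, limsup_bot_real]
    exact add_nonneg (lip_nonneg hh₁ x) (lip_nonneg hh₂ x)
  · have hev : ∀ᶠ y in 𝓝[≠] x, |(h₁ + h₂) y - (h₁ + h₂) x| / dist y x ≤
        ((fun y => |h₁ y - h₁ x| / dist y x) + fun y => |h₂ y - h₂ x| / dist y x) y := by
      refine Eventually.of_forall fun y => ?_
      simp only [Pi.add_apply]
      rw [← add_div]
      have hnum : |(h₁ y + h₂ y) - (h₁ x + h₂ x)| ≤ |h₁ y - h₁ x| + |h₂ y - h₂ x| := by
        have he : (h₁ y + h₂ y) - (h₁ x + h₂ x) = (h₁ y - h₁ x) + (h₂ y - h₂ x) := by ring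
        rw [he]; exact abs_add_le _ _
      exact div_le_div_of_nonneg_right hnum dist_nonneg
    have hbddsum : IsBoundedUnder (· ≤ ·) (𝓝[≠] x)
        ((fun y => |h₁ y - h₁ x| / dist y x) + fun y => |h₂ y - h₂ x| / dist y x) := by
      refine ⟨(K₁ : ℝ) + K₂, eventually_map.2 ?_⟩
      filter_upwards [lipRatio_ev_le hh₁ x, lipRatio_ev_le hh₂ x] with y hy₁ hy₂
      exact add_le_add hy₁ hy₂
    refine le_trans (limsup_le_limsup hev (lipCobdd (h₁ + h₂) x) hbddsum) ?_
    exact limsup_add_le (lipBddBelow h₁ x) (lipBddAbove hh₁ x) (lipCobdd h₂ x)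
      (lipBddAbove hh₂ x)

lemma lipschitzWith_const_mul (hh : LipschitzWith K h) (c : ℝ) :
    LipschitzWith (Real.nnabs c * K) (fun y => c * h y) := by
  refine LipschitzWith.of_dist_le_mul fun y z => ?_
  have h1 : dist (c * h y) (c * h z) = |c| * dist (h y) (h z) := by
    rw [Real.dist_eq, Real.dist_eq, ← mul_sub, abs_mul]
  calc dist (c * h y) (c * h z) = |c| * dist (h y) (h z) := h1
    _ ≤ |c| * (↑K * dist y z) := mul_le_mul_of_nonneg_left (hh.dist_le_mul y z) (abs_nonneg c)
    _ = ↑(Real.nnabs c * K) * dist y z := by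
        push_cast [Real.coe_nnabs]
        ring

lemma lip_sub_le (hh₁ : LipschitzWith K₁ h₁) (hh₂ : LipschitzWith K₂ h₂) (x : M) :
    lip (h₁ - h₂) x ≤ lip h₁ x + lip h₂ x := by
  have he : h₁ - h₂ = h₁ + fun y => (-1 : ℝ) * h₂ y := by
    funext y; simp [sub_eq_add_neg]
  rw [he]
  refine (lip_add_le hh₁ (lipschitzWith_const_mul hh₂ (-1)) x).trans ?_
  rw [lip_const_mul hh₂ (-1) x]
  simp

/-- Sup of the difference quotients over a punctured ball of radius `r`
(with `0` thrown in to avoid emptiness issues). -/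
noncomputable def lipSup (h : M → ℝ) (r : ℝ) (x : M) : ℝ :=
  sSup ((fun y => |h y - h x| / dist y x) '' {y | y ≠ x ∧ dist y x < r} ∪ {0})

lemma lipSup_zero_mem (h : M → ℝ) (r : ℝ) (x : M) :
    (0 : ℝ) ∈ (fun y => |h y - h x| / dist y x) '' {y | y ≠ x ∧ dist y x < r} ∪ {0} :=
  Set.mem_union_right _ rfl

lemma lipSup_bddAbove (hh : LipschitzWith K h) (r : ℝ) (x : M) :
    BddAbove ((fun y => |h y - h x| / dist y x) '' {y | y ≠ x ∧ dist y x < r} ∪ {0}) := by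
  refine ⟨K, ?_⟩
  rintro z (⟨y, ⟨hy, _⟩, rfl⟩ | rfl)
  · exact lipRatio_le_of_ne hh hy
  · exact K.coe_nonneg

lemma lipSup_nonneg (hh : LipschitzWith K h) (r : ℝ) (x : M) : 0 ≤ lipSup h r x :=
  le_csSup (lipSup_bddAbove hh r x) (lipSup_zero_mem h r x)

lemma le_lipSup (hh : LipschitzWith K h) {r : ℝ} {x y : M} (hy : y ≠ x) (hd : dist y x < r) :
    |h y - h x| / dist y x ≤ lipSup h r x :=
  le_csSup (lipSup_bddAbove hh r x) (Set.mem_union_left _ ⟨y, ⟨hy, hd⟩, rfl⟩)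

lemma lipSup_le (hh : LipschitzWith K h) {r b : ℝ} {x : M} (hb : 0 ≤ b)
    (hball : ∀ y, y ≠ x → dist y x < r → |h y - h x| / dist y x ≤ b) : lipSup h r x ≤ b := by
  refine csSup_le ⟨0, lipSup_zero_mem h r x⟩ ?_
  rintro z (⟨y, ⟨hy₁, hy₂⟩, rfl⟩ | rfl)
  · exact hball y hy₁ hy₂
  · exact hb

lemma lipSup_mono (hh : LipschitzWith K h) {r r' : ℝ} (hr : r ≤ r') (x : M) :
    lipSup h r x ≤ lipSup h r' x := by
  refine csSup_le_csSup (lipSup_bddAbove hh r' x) ⟨0, lipSup_zero_mem h r x⟩ ?_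
  refine Set.union_subset_union ?_ le_rfl
  exact Set.image_mono fun y ⟨hy₁, hy₂⟩ => ⟨hy₁, lt_of_lt_of_le hy₂ hr⟩

lemma lipSup_lowerSemicontinuous (hh : LipschitzWith K h) (r : ℝ) :
    LowerSemicontinuous (lipSup h r) := by
  intro x c hc
  obtain ⟨z, hz, hcz⟩ := exists_lt_of_lt_csSup ⟨0, lipSup_zero_mem h r x⟩ hc
  rcases hz with ⟨y, ⟨hyx, hyr⟩, rfl⟩ | hz0
  · have hd : (0 : ℝ) < dist y x := dist_pos.2 hyx
    have hcd : Continuous fun x' : M => dist y x' := continuous_const.dist continuous_id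
    have hcont : ContinuousAt (fun x' => |h y - h x'| / dist y x') x :=
      ContinuousAt.div ((continuous_const.sub hh.continuous).abs.continuousAt)
        hcd.continuousAt hd.ne'
    have h1 : ∀ᶠ x' in 𝓝 x, c < |h y - h x'| / dist y x' :=
      hcont.eventually (eventually_gt_nhds hcz)
    have h2 : ∀ᶠ x' in 𝓝 x, dist y x' < r :=
      hcd.continuousAt.eventually (eventually_lt_nhds hyr)
    have h3 : ∀ᶠ x' in 𝓝 x, 0 < dist y x' :=
      hcd.continuousAt.eventually (eventually_gt_nhds hd)
    filter_upwards [h1, h2, h3] with x' e1 e2 e3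
    exact lt_of_lt_of_le e1 (le_lipSup hh (dist_pos.1 e3) e2)
  · have hc0 : c < 0 := by rwa [Set.mem_singleton_iff.1 hz0] at hcz
    exact Eventually.of_forall fun x' => lt_of_lt_of_le hc0 (lipSup_nonneg hh r x')

lemma lip_le_lipSup (hh : LipschitzWith K h) (x : M) {r : ℝ} (hr : 0 < r) :
    lip h x ≤ lipSup h r x := by
  rcases (𝓝[≠] x).eq_or_neBot with hbot | hne
  · rw [lip, hbot, limsup_bot_real]; exact lipSup_nonneg hh r x
  · refine limsup_le_of_le (lipCobdd h x) ?_
    have hball : ∀ᶠ y in 𝓝[≠] x, dist y x < r :=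
      eventually_nhdsWithin_of_eventually_nhds
        (by filter_upwards [Metric.ball_mem_nhds x hr] with y hy using mem_ball.1 hy)
    filter_upwards [hball, eventually_mem_nhdsWithin] with y hy₁ hy₂
    exact le_lipSup hh hy₂ hy₁

lemma lipSup_bddBelow_range (hh : LipschitzWith K h) (x : M) :
    BddBelow (Set.range fun n : ℕ => lipSup h (1 / ((n : ℝ) + 1)) x) := by
  refine ⟨0, ?_⟩
  rintro z ⟨m, rfl⟩
  exact lipSup_nonneg hh _ x

lemma lipSup_antitone (hh : LipschitzWith K h) (x : M) :
    Antitone fun n : ℕ => lipSup h (1 / ((n : ℝ) + 1)) x := by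
  intro n m hnm
  refine lipSup_mono hh ?_ x
  have h1 : (0 : ℝ) < (n : ℝ) + 1 := by positivity
  exact one_div_le_one_div_of_le h1 (by exact_mod_cast add_le_add_left (Nat.cast_le.2 hnm) 1)

lemma lip_eq_iInf (hh : LipschitzWith K h) (x : M) :
    lip h x = ⨅ n : ℕ, lipSup h (1 / ((n : ℝ) + 1)) x := by
  refine le_antisymm (le_ciInf fun n => lip_le_lipSup hh x (by positivity)) ?_
  refine le_of_forall_gt_imp_ge_of_dense fun b hb => ?_
  have hb0 : 0 ≤ b := (lip_nonneg hh x).trans hb.le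
  rcases (𝓝[≠] x).eq_or_neBot with hbot | hne
  · have hx : x ∉ closure ({x}ᶜ : Set M) := by
      rw [mem_closure_iff_nhdsWithin_neBot]
      rw [hbot]
      exact fun hcon => hcon.ne rfl
    rw [Metric.mem_closure_iff] at hx
    push_neg at hx
    obtain ⟨δ, hδpos, hδ⟩ := hx
    obtain ⟨n, hn⟩ := exists_nat_one_div_lt hδpos
    refine ciInf_le_of_le (lipSup_bddBelow_range hh x) n ?_
    refine lipSup_le hh hb0 fun y hy hdy => absurd ?_ (not_lt.2 (hδ y hy))
    rw [dist_comm]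
    exact lt_trans hdy hn
  · have hev : ∀ᶠ y in 𝓝[≠] x, |h y - h x| / dist y x < b := by
      have : lip h x < b := hb
      rw [lip] at this
      exact eventually_lt_of_limsup_lt this (lipBddAbove hh x)
    rw [eventually_nhdsWithin_iff] at hev
    obtain ⟨δ, hδpos, hδ⟩ := Metric.eventually_nhds_iff_ball.1 hev
    obtain ⟨n, hn⟩ := exists_nat_one_div_lt hδpos
    refine ciInf_le_of_le (lipSup_bddBelow_range hh x) n ?_
    refine lipSup_le hh hb0 fun y hy hdy => ?_
    exact (hδ y (mem_ball.2 (lt_trans hdy hn)) hy).le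

lemma measurable_lip [MeasurableSpace M] [OpensMeasurableSpace M]
    (hh : LipschitzWith K h) : Measurable (lip h) := by
  have he : lip h = fun x => ⨅ n : ℕ, lipSup h (1 / ((n : ℝ) + 1)) x :=
    funext fun x => lip_eq_iInf hh x
  rw [he]
  refine measurable_of_tendsto_metrizable
    (fun n => (lipSup_lowerSemicontinuous hh (1 / ((n : ℝ) + 1))).measurable) ?_
  rw [tendsto_pi_nhds]
  intro x
  exact tendsto_atTop_ciInf (lipSup_antitone hh x) (lipSup_bddBelow_range hh x)

end LipLemmas

section TIMLemmas

variable {α : Type*} [MeasurableSpace α] {μ : Measure α} {F G : ℕ → α → ℝ} {f g : α → ℝ}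

lemma tim_subseq (hF : TendstoInMeasure μ F atTop f) {φ : ℕ → ℕ} (hφ : StrictMono φ) :
    TendstoInMeasure μ (fun k => F (φ k)) atTop f :=
  fun ε hε => (hF ε hε).comp hφ.tendsto_atTop

lemma tim_add (hF : TendstoInMeasure μ F atTop f) (hG : TendstoInMeasure μ G atTop g) :
    TendstoInMeasure μ (fun n => F n + G n) atTop (f + g) := by
  rw [tendstoInMeasure_iff_dist] at hF hG ⊢
  intro ε hε
  have key : ∀ n, μ {x | ε ≤ dist ((F n + G n) x) ((f + g) x)}
      ≤ μ {x | ε / 2 ≤ dist (F n x) (f x)} + μ {x | ε / 2 ≤ dist (G n x) (g x)} := by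
    intro n
    refine le_trans (measure_mono ?_) (measure_union_le _ _)
    intro x hx
    simp only [Set.mem_setOf_eq, Set.mem_union, Pi.add_apply] at hx ⊢
    by_contra hcon
    push_neg at hcon
    have hd := dist_add_add_le (F n x) (G n x) (f x) (g x)
    linarith [hcon.1, hcon.2]
  have h0 : Tendsto (fun n => μ {x | ε / 2 ≤ dist (F n x) (f x)}
      + μ {x | ε / 2 ≤ dist (G n x) (g x)}) atTop (𝓝 0) := by
    have := (hF (ε / 2) (half_pos hε)).add (hG (ε / 2) (half_pos hε))
    simpa using this
  exact tendsto_of_tendsto_of_tendsto_of_le_of_le tendsto_const_nhds h0 (fun n => bot_le) key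

lemma tim_sub (hF : TendstoInMeasure μ F atTop f) (hG : TendstoInMeasure μ G atTop g) :
    TendstoInMeasure μ (fun n => F n - G n) atTop (f - g) := by
  rw [tendstoInMeasure_iff_dist] at hF hG ⊢
  intro ε hε
  have key : ∀ n, μ {x | ε ≤ dist ((F n - G n) x) ((f - g) x)}
      ≤ μ {x | ε / 2 ≤ dist (F n x) (f x)} + μ {x | ε / 2 ≤ dist (G n x) (g x)} := by
    intro n
    refine le_trans (measure_mono ?_) (measure_union_le _ _)
    intro x hx
    simp only [Set.mem_setOf_eq, Set.mem_union, Pi.sub_apply] at hx ⊢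
    by_contra hcon
    push_neg at hcon
    have hd := dist_sub_sub_le (F n x) (G n x) (f x) (g x)
    linarith [hcon.1, hcon.2]
  have h0 : Tendsto (fun n => μ {x | ε / 2 ≤ dist (F n x) (f x)}
      + μ {x | ε / 2 ≤ dist (G n x) (g x)}) atTop (𝓝 0) := by
    have := (hF (ε / 2) (half_pos hε)).add (hG (ε / 2) (half_pos hε))
    simpa using this
  exact tendsto_of_tendsto_of_tendsto_of_le_of_le tendsto_const_nhds h0 (fun n => bot_le) key

lemma tim_const_mul (c : ℝ) (hF : TendstoInMeasure μ F atTop f) :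
    TendstoInMeasure μ (fun n x => c * F n x) atTop (fun x => c * f x) := by
  rw [tendstoInMeasure_iff_dist] at hF ⊢
  rcases eq_or_ne c 0 with rfl | hc
  · intro ε hε
    have hempty : ∀ n, {x | ε ≤ dist ((0 : ℝ) * F n x) ((0 : ℝ) * f x)} = (∅ : Set α) := by
      intro n; ext x; simp [hε.not_ge]
    simp only [hempty, measure_empty]
    exact tendsto_const_nhds
  · intro ε hε
    have hceq : ∀ n, {x | ε ≤ dist (c * F n x) (c * f x)}
        = {x | ε / |c| ≤ dist (F n x) (f x)} := by
      intro n; ext x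
      simp only [Set.mem_setOf_eq, Real.dist_eq, ← mul_sub, abs_mul]
      rw [mul_comm]
      exact (div_le_iff₀ (abs_pos.2 hc)).symm
    simp only [hceq]
    exact hF _ (div_pos hε (abs_pos.2 hc))

end TIMLemmas

section ENNRealLemmas

lemma ennreal_liminf_add_ge (u v : ℕ → ℝ≥0∞) :
    atTop.liminf u + atTop.liminf v ≤ atTop.liminf fun n => u n + v n := by
  rw [liminf_eq_iSup_iInf_of_nat, liminf_eq_iSup_iInf_of_nat, liminf_eq_iSup_iInf_of_nat]
  refine ENNReal.iSup_add_iSup_le fun n m => ?_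
  refine le_trans ?_ (le_iSup (fun k => ⨅ i ≥ k, u i + v i) (max n m))
  refine le_iInf fun i => le_iInf fun hi => ?_
  exact add_le_add (iInf₂_le i (le_trans (le_max_left n m) hi))
    (iInf₂_le i (le_trans (le_max_right n m) hi))

lemma ennreal_liminf_const_mul {u : ℕ → ℝ≥0∞} {a : ℝ≥0∞} (h0 : a ≠ 0) (ht : a ≠ ⊤) :
    (atTop.liminf fun n => a * u n) = a * atTop.liminf u := by
  have hg_bij : Function.Bijective (fun x : ℝ≥0∞ => a * x) :=
    Function.bijective_iff_has_inverse.mpr ⟨fun x => a⁻¹ * x,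
      ⟨fun x => by simp [← mul_assoc, ENNReal.inv_mul_cancel h0 ht],
       fun x => by simp [← mul_assoc, ENNReal.mul_inv_cancel h0 ht]⟩⟩
  have hg_mono : StrictMono (fun x : ℝ≥0∞ => a * x) :=
    Monotone.strictMono_of_injective (fun _ _ h => mul_le_mul_right h a) hg_bij.1
  let g_iso := StrictMono.orderIsoOfSurjective _ hg_mono hg_bij.2
  exact (OrderIso.liminf_apply g_iso).symm

end ENNRealLemmas

section Ch2Lemmas

variable {M : Type*} [MetricSpace M] [MeasurableSpace M] [OpensMeasurableSpace M]
  {μ : Measure M}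

lemma memLp_lip_add {F G : M → ℝ} {K₁ K₂ : ℝ≥0} (hF : LipschitzWith K₁ F)
    (hG : LipschitzWith K₂ G) (h2F : MemLp (lip F) 2 μ) (h2G : MemLp (lip G) 2 μ) :
    MemLp (lip (F + G)) 2 μ := by
  have hFG : LipschitzWith (K₁ + K₂) (F + G) := hF.add hG
  refine (h2F.add h2G).of_le (measurable_lip hFG).aestronglyMeasurable ?_
  refine Eventually.of_forall fun x => ?_
  simp only [Pi.add_apply, Real.norm_eq_abs]
  rw [abs_of_nonneg (lip_nonneg hFG x)]
  exact (lip_add_le hF hG x).trans (le_abs_self _)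

lemma memLp_lip_sub {F G : M → ℝ} {K₁ K₂ : ℝ≥0} (hF : LipschitzWith K₁ F)
    (hG : LipschitzWith K₂ G) (h2F : MemLp (lip F) 2 μ) (h2G : MemLp (lip G) 2 μ) :
    MemLp (lip (F - G)) 2 μ := by
  have hFG : LipschitzWith (K₁ + K₂) (F - G) := hF.sub hG
  refine (h2F.add h2G).of_le (measurable_lip hFG).aestronglyMeasurable ?_
  refine Eventually.of_forall fun x => ?_
  simp only [Pi.add_apply, Real.norm_eq_abs]
  rw [abs_of_nonneg (lip_nonneg hFG x)]
  exact (lip_sub_le hF hG x).trans (le_abs_self _)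

lemma Ch2_le_liminf {f : M → ℝ} {fn : ℕ → M → ℝ}
    (hadm : ∀ n, (∃ K : ℝ≥0, LipschitzWith K (fn n)) ∧ MemLp (lip (fn n)) 2 μ)
    (hconv : TendstoL0 μ fn f) :
    Ch2 μ f ≤ atTop.liminf fun n => ∫⁻ x, ENNReal.ofReal (lip (fn n) x ^ 2) ∂μ :=
  iInf_le_of_le fn (iInf_le_of_le hadm (iInf_le _ hconv))

lemma exists_admissible {f : M → ℝ} {C : ℝ≥0∞} (hC : Ch2 μ f < C) :
    ∃ fn : ℕ → M → ℝ, (∀ n, (∃ K : ℝ≥0, LipschitzWith K (fn n)) ∧ MemLp (lip (fn n)) 2 μ)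
      ∧ TendstoL0 μ fn f
      ∧ (atTop.liminf fun n => ∫⁻ x, ENNReal.ofReal (lip (fn n) x ^ 2) ∂μ) < C := by
  rw [Ch2, iInf_lt_iff] at hC
  obtain ⟨fn, hfn⟩ := hC
  rw [iInf_lt_iff] at hfn
  obtain ⟨h1, hfn⟩ := hfn
  rw [iInf_lt_iff] at hfn
  obtain ⟨h2, hfn⟩ := hfn
  exact ⟨fn, h1, h2, hfn⟩

lemma energy_const_mul {h : M → ℝ} {K : ℝ≥0} (hh : LipschitzWith K h) (c : ℝ) :
    ∫⁻ x, ENNReal.ofReal (lip (fun y => c * h y) x ^ 2) ∂μ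
      = ENNReal.ofReal (c ^ 2) * ∫⁻ x, ENNReal.ofReal (lip h x ^ 2) ∂μ := by
  have hfun : ∀ x, ENNReal.ofReal (lip (fun y => c * h y) x ^ 2)
      = ENNReal.ofReal (c ^ 2) * ENNReal.ofReal (lip h x ^ 2) := by
    intro x
    rw [lip_const_mul hh c x, mul_pow, sq_abs, ENNReal.ofReal_mul (sq_nonneg c)]
  simp_rw [hfun]
  exact lintegral_const_mul _ ((measurable_lip hh).pow_const 2).ennreal_ofReal

end Ch2Lemmas

section Main

variable {M : Type*} [MetricSpace M] [MeasurableSpace M] [OpensMeasurableSpace M]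

lemma Ch2_key {μ : Measure M}
    (hriem : ∀ f g : M → ℝ,
      (∃ K : ℝ≥0, LipschitzWith K f) → (∃ K : ℝ≥0, LipschitzWith K g) →
      MemLp (lip f) 2 μ → MemLp (lip g) 2 μ →
      ∀ᵐ x ∂μ, lip (f + g) x ^ 2 + lip (f - g) x ^ 2 = 2 * lip f x ^ 2 + 2 * lip g x ^ 2)
    (f g : M → ℝ) :
    Ch2 μ (f + g) + Ch2 μ (f - g) ≤ 2 * Ch2 μ f + 2 * Ch2 μ g := by
  by_cases hf : Ch2 μ f = ∞
  · have h : (2 : ℝ≥0∞) * Ch2 μ f = ∞ := by rw [hf]; exact ENNReal.mul_top (by norm_num)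
    rw [h, top_add]
    exact le_top
  by_cases hg' : Ch2 μ g = ∞
  · have h : (2 : ℝ≥0∞) * Ch2 μ g = ∞ := by rw [hg']; exact ENNReal.mul_top (by norm_num)
    rw [h, add_top]
    exact le_top
  refine ENNReal.le_of_forall_pos_le_add fun ε hε _ => ?_
  set δ : ℝ≥0∞ := (ε : ℝ≥0∞) / 4 with hδdef
  have hεne : (ε : ℝ≥0∞) ≠ 0 := by exact_mod_cast hε.ne'
  have hδ0 : δ ≠ 0 := by
    simp only [hδdef, ne_eq, ENNReal.div_eq_zero_iff, hεne, false_or]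
    norm_num
  obtain ⟨fn, hfnadm, hfnconv, hfnE⟩ := exists_admissible (ENNReal.lt_add_right hf hδ0)
  obtain ⟨gn, hgnadm, hgnconv, hgnE⟩ := exists_admissible (ENNReal.lt_add_right hg' hδ0)
  obtain ⟨φ, hφmono, hφ⟩ := extraction_of_frequently_atTop
    (frequently_lt_of_liminf_lt (by isBoundedDefault) hfnE)
  obtain ⟨ψ, hψmono, hψ⟩ := extraction_of_frequently_atTop
    (frequently_lt_of_liminf_lt (by isBoundedDefault) hgnE)
  set F : ℕ → M → ℝ := fun k => fn (φ k) with hFdef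
  set G : ℕ → M → ℝ := fun k => gn (ψ k) with hGdef
  have hFadm : ∀ k, (∃ K : ℝ≥0, LipschitzWith K (F k)) ∧ MemLp (lip (F k)) 2 μ :=
    fun k => hfnadm (φ k)
  have hGadm : ∀ k, (∃ K : ℝ≥0, LipschitzWith K (G k)) ∧ MemLp (lip (G k)) 2 μ :=
    fun k => hgnadm (ψ k)
  have hFconv : TendstoL0 μ F f := fun A hA hμ => tim_subseq (hfnconv A hA hμ) hφmono
  have hGconv : TendstoL0 μ G g := fun A hA hμ => tim_subseq (hgnconv A hA hμ) hψmono
  have haddadm : ∀ k, (∃ K : ℝ≥0, LipschitzWith K (F k + G k))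
      ∧ MemLp (lip (F k + G k)) 2 μ := by
    intro k
    obtain ⟨⟨K₁, hK₁⟩, hM₁⟩ := hFadm k
    obtain ⟨⟨K₂, hK₂⟩, hM₂⟩ := hGadm k
    exact ⟨⟨K₁ + K₂, hK₁.add hK₂⟩, memLp_lip_add hK₁ hK₂ hM₁ hM₂⟩
  have hsubadm : ∀ k, (∃ K : ℝ≥0, LipschitzWith K (F k - G k))
      ∧ MemLp (lip (F k - G k)) 2 μ := by
    intro k
    obtain ⟨⟨K₁, hK₁⟩, hM₁⟩ := hFadm k
    obtain ⟨⟨K₂, hK₂⟩, hM₂⟩ := hGadm k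
    exact ⟨⟨K₁ + K₂, hK₁.sub hK₂⟩, memLp_lip_sub hK₁ hK₂ hM₁ hM₂⟩
  have h1 : Ch2 μ (f + g)
      ≤ atTop.liminf fun k => ∫⁻ x, ENNReal.ofReal (lip (F k + G k) x ^ 2) ∂μ :=
    Ch2_le_liminf haddadm (fun A hA hμ => tim_add (hFconv A hA hμ) (hGconv A hA hμ))
  have h2 : Ch2 μ (f - g)
      ≤ atTop.liminf fun k => ∫⁻ x, ENNReal.ofReal (lip (F k - G k) x ^ 2) ∂μ :=
    Ch2_le_liminf hsubadm (fun A hA hμ => tim_sub (hFconv A hA hμ) (hGconv A hA hμ))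
  have hEk : ∀ k, (∫⁻ x, ENNReal.ofReal (lip (F k + G k) x ^ 2) ∂μ)
      + (∫⁻ x, ENNReal.ofReal (lip (F k - G k) x ^ 2) ∂μ)
      ≤ 2 * (Ch2 μ f + δ) + 2 * (Ch2 μ g + δ) := by
    intro k
    obtain ⟨⟨K₁, hK₁⟩, hM₁⟩ := hFadm k
    obtain ⟨⟨K₂, hK₂⟩, hM₂⟩ := hGadm k
    have hmeas1 : Measurable fun x => ENNReal.ofReal (lip (F k + G k) x ^ 2) :=
      ((measurable_lip (hK₁.add hK₂)).pow_const 2).ennreal_ofReal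
    have hmF : Measurable fun x => ENNReal.ofReal (lip (F k) x ^ 2) :=
      ((measurable_lip hK₁).pow_const 2).ennreal_ofReal
    have hmG : Measurable fun x => ENNReal.ofReal (lip (G k) x ^ 2) :=
      ((measurable_lip hK₂).pow_const 2).ennreal_ofReal
    have hae := hriem (F k) (G k) ⟨K₁, hK₁⟩ ⟨K₂, hK₂⟩ hM₁ hM₂
    rw [← lintegral_add_left hmeas1]
    have heq : ∫⁻ x, (ENNReal.ofReal (lip (F k + G k) x ^ 2)
          + ENNReal.ofReal (lip (F k - G k) x ^ 2)) ∂μ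
        = ∫⁻ x, (2 * ENNReal.ofReal (lip (F k) x ^ 2)
          + 2 * ENNReal.ofReal (lip (G k) x ^ 2)) ∂μ := by
      refine lintegral_congr_ae ?_
      filter_upwards [hae] with x hx
      rw [← ENNReal.ofReal_add (sq_nonneg _) (sq_nonneg _), hx,
        ENNReal.ofReal_add (by positivity) (by positivity),
        ENNReal.ofReal_mul (by norm_num), ENNReal.ofReal_mul (by norm_num)]
      norm_num
    rw [heq, lintegral_add_left (hmF.const_mul 2), lintegral_const_mul 2 hmF,
      lintegral_const_mul 2 hmG]
    exact add_le_add (mul_le_mul_right (hφ k).le 2) (mul_le_mul_right (hψ k).le 2)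
  have hmain : Ch2 μ (f + g) + Ch2 μ (f - g) ≤ 2 * (Ch2 μ f + δ) + 2 * (Ch2 μ g + δ) := by
    refine le_trans (add_le_add h1 h2) ?_
    refine le_trans (ennreal_liminf_add_ge _ _) ?_
    exact (liminf_le_liminf (Eventually.of_forall hEk)).trans_eq (liminf_const _)
  refine hmain.trans (le_of_eq ?_)
  have hδsum : (2 : ℝ≥0∞) * δ + 2 * δ = (ε : ℝ≥0∞) := by
    have h4 : (2 : ℝ≥0∞) * ((ε : ℝ≥0∞) / 4) + 2 * ((ε : ℝ≥0∞) / 4)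
        = (ε : ℝ≥0∞) / 4 * 4 := by ring
    rw [hδdef, h4, ENNReal.div_mul_cancel (by norm_num) (by norm_num)]
  calc 2 * (Ch2 μ f + δ) + 2 * (Ch2 μ g + δ)
      = 2 * Ch2 μ f + 2 * Ch2 μ g + (2 * δ + 2 * δ) := by ring
    _ = 2 * Ch2 μ f + 2 * Ch2 μ g + ε := by rw [hδsum]

lemma Ch2_const_mul_le {μ : Measure M} (c : ℝ) (hc : c ≠ 0) (f : M → ℝ) :
    Ch2 μ (fun x => c * f x) ≤ ENNReal.ofReal (c ^ 2) * Ch2 μ f := by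
  have h0 : ENNReal.ofReal (c ^ 2) ≠ 0 := by
    rw [ne_eq, ENNReal.ofReal_eq_zero, not_le]
    positivity
  have ht : ENNReal.ofReal (c ^ 2) ≠ ⊤ := ENNReal.ofReal_ne_top
  conv_rhs => rw [Ch2]
  simp_rw [ENNReal.mul_iInf_of_ne h0 ht]
  refine le_iInf fun fn => le_iInf fun hadm => le_iInf fun hconv => ?_
  have hseq : ∀ k, (∃ K : ℝ≥0, LipschitzWith K (fun x => c * fn k x))
      ∧ MemLp (lip (fun x => c * fn k x)) 2 μ := by
    intro k
    obtain ⟨⟨K, hK⟩, hM⟩ := hadm k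
    refine ⟨⟨Real.nnabs c * K, lipschitzWith_const_mul hK c⟩, ?_⟩
    have he : lip (fun x => c * fn k x) = fun x => |c| * lip (fn k) x :=
      funext fun x => lip_const_mul hK c x
    rw [he]
    exact hM.const_mul _
  have hconv' : TendstoL0 μ (fun k x => c * fn k x) (fun x => c * f x) :=
    fun A hA hμ => tim_const_mul c (hconv A hA hμ)
  refine (Ch2_le_liminf hseq hconv').trans ?_
  have hE : (fun k => ∫⁻ x, ENNReal.ofReal (lip (fun y => c * fn k y) x ^ 2) ∂μ)
      = fun k => ENNReal.ofReal (c ^ 2) * ∫⁻ x, ENNReal.ofReal (lip (fn k) x ^ 2) ∂μ := by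
    funext k
    obtain ⟨⟨K, hK⟩, _⟩ := hadm k
    exact energy_const_mul hK c
  rw [hE, ennreal_liminf_const_mul h0 ht]

end Main

/-- An infinitesimally Riemannian space (the parallelogram identity holds a.e. for local
Lipschitz constants) is infinitesimally Hilbertian: the Cheeger energy `Ch₂` is a quadratic
form on `L⁰(μ)`. -/
theorem stmt15 {M : Type*} [MetricSpace M] [CompleteSpace M]
    [MeasurableSpace M] [BorelSpace M]
    (μ : Measure M) [IsFiniteMeasureOnCompacts μ] [μ.Regular]
    (hfin : ∀ s : Set M, Bornology.IsBounded s → μ s < ∞)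
    (hriem : ∀ f g : M → ℝ,
      (∃ K : ℝ≥0, LipschitzWith K f) → (∃ K : ℝ≥0, LipschitzWith K g) →
      MemLp (lip f) 2 μ → MemLp (lip g) 2 μ →
      ∀ᵐ x ∂μ, lip (f + g) x ^ 2 + lip (f - g) x ^ 2 = 2 * lip f x ^ 2 + 2 * lip g x ^ 2)
    (f g : M → ℝ) (hf : Measurable f) (hg : Measurable g) :
    Ch2 μ (f + g) + Ch2 μ (f - g) = 2 * Ch2 μ f + 2 * Ch2 μ g := by
  have h1 := Ch2_key (μ := μ) hriem f g
  have h2 := Ch2_key (μ := μ) hriem (f + g) (f - g)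
  have e1 : (f + g) + (f - g) = fun x => 2 * f x := by
    funext x; simp only [Pi.add_apply, Pi.sub_apply]; ring
  have e2 : (f + g) - (f - g) = fun x => 2 * g x := by
    funext x; simp only [Pi.add_apply, Pi.sub_apply]; ring
  rw [e1, e2] at h2
  set q : ℝ≥0∞ := ENNReal.ofReal ((1 / 2 : ℝ) ^ 2) with hqdef
  have h3 : Ch2 μ f ≤ q * Ch2 μ (fun x => 2 * f x) := by
    have h := Ch2_const_mul_le (μ := μ) (1 / 2 : ℝ) (by norm_num) (fun x => 2 * f x)
    have he : (fun x => (1 / 2 : ℝ) * (2 * f x)) = f := by funext x; ring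
    rwa [he] at h
  have h4 : Ch2 μ g ≤ q * Ch2 μ (fun x => 2 * g x) := by
    have h := Ch2_const_mul_le (μ := μ) (1 / 2 : ℝ) (by norm_num) (fun x => 2 * g x)
    have he : (fun x => (1 / 2 : ℝ) * (2 * g x)) = g := by funext x; ring
    rwa [he] at h
  have hq4 : (4 : ℝ≥0∞) * q = 1 := by
    rw [hqdef, show ((1 / 2 : ℝ) ^ 2) = (4 : ℝ)⁻¹ by norm_num,
      ENNReal.ofReal_inv_of_pos (by norm_num), show ENNReal.ofReal (4 : ℝ) = 4 by
        rw [ENNReal.ofReal_ofNat]]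
    exact ENNReal.mul_inv_cancel (by norm_num) (by norm_num)
  refine le_antisymm h1 ?_
  calc 2 * Ch2 μ f + 2 * Ch2 μ g
      ≤ 2 * (q * Ch2 μ (fun x => 2 * f x)) + 2 * (q * Ch2 μ (fun x => 2 * g x)) :=
        add_le_add (mul_le_mul_right h3 2) (mul_le_mul_right h4 2)
    _ = 2 * q * (Ch2 μ (fun x => 2 * f x) + Ch2 μ (fun x => 2 * g x)) := by ring
    _ ≤ 2 * q * (2 * Ch2 μ (f + g) + 2 * Ch2 μ (f - g)) := mul_le_mul_right h2 _
    _ = 4 * q * (Ch2 μ (f + g) + Ch2 μ (f - g)) := by ring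
    _ = Ch2 μ (f + g) + Ch2 μ (f - g) := by rw [hq4, one_mul]
end
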